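/- Let j₁₂, j₁₃, j₁₄, j₃₄, j₂₄, j₂₃ be positive reals such that each of the four faces satisfies strict triangle inequalities (so each A_h² > 0) and V² > 0 (a nondegenerate Euclidean tetrahedron). Define interior dihedral angles θ̄_hk := arccos(C_hk/(16 A_h A_k)) with A_h := √(A_h²). Then at every vertex v ∈ {1,2,3,4}, the sum of the three interior dihedral angles on the edges containing v exceeds π; that is, Σ_{{h,k} ⊆ {1,2,3,4}∖{v}} θ̄_hk > π. -/

import Mathlib

open Real

/-- Heron's formula for the squared area of a triangle with sides `x, y, z`. -/
noncomputable def heron (x y z : ℝ) : ℝ :=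
  (1/16) * (x + y + z) * (-x + y + z) * (x - y + z) * (x + y - z)

/-- The 5×5 Cayley matrix of a tetrahedron with edge lengths
`J = (j₁₂, j₁₃, j₁₄, j₃₄, j₂₄, j₂₃)` (edge `(h,k)` joins the two vertices
other than `h` and `k`). -/
noncomputable def cayley (J : Fin 6 → ℝ) : Matrix (Fin 5) (Fin 5) ℝ :=
  !![0,         (J 3)^2, (J 4)^2, (J 5)^2, 1;
     (J 3)^2,   0,       (J 2)^2, (J 1)^2, 1;
     (J 4)^2,   (J 2)^2, 0,       (J 0)^2, 1;
     (J 5)^2,   (J 1)^2, (J 0)^2, 0,       1;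
     1,         1,       1,       1,       0]

/-- The `(r,s)` cofactor `C_rs` of the Cayley matrix (vertices `r, s ∈ {1,…,4}`
correspond to indices `r−1, s−1 : Fin 5`). -/
noncomputable def cof (J : Fin 6 → ℝ) (r s : Fin 5) : ℝ :=
  (-1 : ℝ) ^ ((r : ℕ) + (s : ℕ)) *
    ((cayley J).submatrix r.succAbove s.succAbove).det

/-- Squared areas of the four faces: `A_h²` is the squared area of the face
obtained by deleting vertex `h` (index `h−1 : Fin 5`). -/
noncomputable def Asq (J : Fin 6 → ℝ) : Fin 5 → ℝ :=
  ![heron (J 0) (J 1) (J 2), heron (J 0) (J 4) (J 5),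
    heron (J 1) (J 3) (J 5), heron (J 2) (J 3) (J 4), 0]

/-- The exterior dihedral angle `θ_hk = arccos(−C_hk/(16 A_h A_k))` of a
Euclidean tetrahedron. -/
noncomputable def thetaE (J : Fin 6 → ℝ) (r s : Fin 5) : ℝ :=
  arccos (-(cof J r s) / (16 * Real.sqrt (Asq J r) * Real.sqrt (Asq J s)))

/-- The exterior dihedral angle `θ′_hk = arccos(C′_hk/(16 |A′_h| |A′_k|))` of a
Lorentzian tetrahedron with timelike faces (`A′_h² < 0`, `|A′_h| = √(−A′_h²)`). -/
noncomputable def thetaL (J : Fin 6 → ℝ) (r s : Fin 5) : ℝ :=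
  arccos (cof J r s / (16 * Real.sqrt (-(Asq J r)) * Real.sqrt (-(Asq J s))))

/-- `(x,y,z)` satisfies strict triangle inequalities. -/
def StrictTri (x y z : ℝ) : Prop := x + y > z ∧ y + z > x ∧ x + z > y

/-- `(x,y,z)` satisfies the SU(1,1) (anti-triangle) inequalities
`z ≥ x+y+1`, `x < y+z`, `y < x+z`. -/
def AntiTri (x y z : ℝ) : Prop := z ≥ x + y + 1 ∧ x < y + z ∧ y < x + z

/-- The interior dihedral angle `θ̄_hk = arccos(C_hk/(16 A_h A_k))` of a
Euclidean tetrahedron. -/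
noncomputable def thetaEint (J : Fin 6 → ℝ) (r s : Fin 5) : ℝ :=
  arccos (cof J r s / (16 * Real.sqrt (Asq J r) * Real.sqrt (Asq J s)))

private theorem heron_pos' {x y z : ℝ} (hx : 0 < x) (h : StrictTri x y z) :
    0 < heron x y z := by
  obtain ⟨h1, h2, h3⟩ := h
  have a1 : 0 < x + y + z := by linarith
  have a2 : 0 < -x + y + z := by linarith
  have a3 : 0 < x - y + z := by linarith
  have a4 : 0 < x + y - z := by linarith
  have h16 : (0:ℝ) < 1/16 := by norm_num
  exact mul_pos (mul_pos (mul_pos (mul_pos h16 a1) a2) a3) a4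

set_option maxHeartbeats 2000000 in
private theorem cayley_det_eq (J : Fin 6 → ℝ) : (cayley J).det =
    -2*(J 2)^2*(J 5)^4 + 2*(J 2)^2*(J 4)^2*(J 5)^2 + 2*(J 2)^2*(J 3)^2*(J 5)^2 + -2*(J 2)^2*(J 3)^2*(J 4)^2 + -2*(J 2)^4*(J 5)^2 + 2*(J 1)^2*(J 4)^2*(J 5)^2 + -2*(J 1)^2*(J 4)^4 + -2*(J 1)^2*(J 3)^2*(J 5)^2 + 2*(J 1)^2*(J 3)^2*(J 4)^2 + 2*(J 1)^2*(J 2)^2*(J 5)^2 + 2*(J 1)^2*(J 2)^2*(J 4)^2 + -2*(J 1)^4*(J 4)^2 + -2*(J 0)^2*(J 4)^2*(J 5)^2 + 2*(J 0)^2*(J 3)^2*(J 5)^2 + 2*(J 0)^2*(J 3)^2*(J 4)^2 + -2*(J 0)^2*(J 3)^4 + 2*(J 0)^2*(J 2)^2*(J 5)^2 + 2*(J 0)^2*(J 2)^2*(J 3)^2 + 2*(J 0)^2*(J 1)^2*(J 4)^2 + 2*(J 0)^2*(J 1)^2*(J 3)^2 + -2*(J 0)^2*(J 1)^2*(J 2)^2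 + -2*(J 0)^4*(J 3)^2 := by
  simp [cayley, Matrix.det_succ_row_zero, Fin.sum_univ_succ, Fin.succAbove, Fin.castSucc,
    Fin.castAdd, Fin.castLE]
  ring

private theorem det4 (a b c d e f g h i j k l m n o p : ℝ) :
    Matrix.det !![a,b,c,d; e,f,g,h; i,j,k,l; m,n,o,p] =
      a*(f*(k*p-l*o)-g*(j*p-l*n)+h*(j*o-k*n))
      - b*(e*(k*p-l*o)-g*(i*p-l*m)+h*(i*o-k*m))
      + c*(e*(j*p-l*n)-f*(i*p-l*m)+h*(i*n-j*m))
      - d*(e*(j*o-k*n)-f*(i*o-k*m)+g*(i*n-j*m)) := by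
  simp [Matrix.det_succ_row_zero, Fin.sum_univ_succ, Fin.succAbove, Fin.castSucc,
    Fin.castAdd, Fin.castLE]
  ring

set_option maxHeartbeats 1000000 in
private theorem cof01_eq (J : Fin 6 → ℝ) : cof J 0 1 =
    (J 2)^2*(J 5)^2 + -1*(J 2)^2*(J 4)^2 + -1*(J 1)^2*(J 5)^2 + (J 1)^2*(J 4)^2 + (J 0)^2*(J 5)^2 + (J 0)^2*(J 4)^2 + -2*(J 0)^2*(J 3)^2 + (J 0)^2*(J 2)^2 + (J 0)^2*(J 1)^2 + -1*(J 0)^4 := by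
  have hsub : ((cayley J).submatrix (Fin.succAbove 0) (Fin.succAbove 1)) =
      !![(J 3)^2, (J 2)^2, (J 1)^2, 1;
         (J 4)^2, 0, (J 0)^2, 1;
         (J 5)^2, (J 0)^2, 0, 1;
         1, 1, 1, 0] := by
    ext i j
    fin_cases i <;> fin_cases j <;> rfl
  rw [cof, hsub, show ((0:Fin 5):ℕ) + ((1:Fin 5):ℕ) = 1 from rfl, det4]
  ring

set_option maxHeartbeats 1000000 in
private theorem cof02_eq (J : Fin 6 → ℝ) : cof J 0 2 =
    (J 2)^2*(J 5)^2 + -1*(J 2)^2*(J 3)^2 + (J 1)^2*(J 5)^2 + -2*(J 1)^2*(J 4)^2 + (J 1)^2*(J 3)^2 + (J 1)^2*(J 2)^2 + -1*(J 1)^4 + -1*(J 0)^2*(J 5)^2 + (J 0)^2*(J 3)^2 + (J 0)^2*(J 1)^2 := by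
  have hsub : ((cayley J).submatrix (Fin.succAbove 0) (Fin.succAbove 2)) =
      !![(J 3)^2, 0, (J 1)^2, 1;
         (J 4)^2, (J 2)^2, (J 0)^2, 1;
         (J 5)^2, (J 1)^2, 0, 1;
         1, 1, 1, 0] := by
    ext i j
    fin_cases i <;> fin_cases j <;> rfl
  rw [cof, hsub, show ((0:Fin 5):ℕ) + ((2:Fin 5):ℕ) = 2 from rfl, det4]
  ring

set_option maxHeartbeats 1000000 in
private theorem cof03_eq (J : Fin 6 → ℝ) : cof J 0 3 =
    -2*(J 2)^2*(J 5)^2 + (J 2)^2*(J 4)^2 + (J 2)^2*(J 3)^2 + -1*(J 2)^4 + (J 1)^2*(J 4)^2 + -1*(J 1)^2*(J 3)^2 + (J 1)^2*(J 2)^2 + -1*(J 0)^2*(J 4)^2 + (J 0)^2*(J 3)^2 + (J 0)^2*(J 2)^2 := by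
  have hsub : ((cayley J).submatrix (Fin.succAbove 0) (Fin.succAbove 3)) =
      !![(J 3)^2, 0, (J 2)^2, 1;
         (J 4)^2, (J 2)^2, 0, 1;
         (J 5)^2, (J 1)^2, (J 0)^2, 1;
         1, 1, 1, 0] := by
    ext i j
    fin_cases i <;> fin_cases j <;> rfl
  rw [cof, hsub, show ((0:Fin 5):ℕ) + ((3:Fin 5):ℕ) = 3 from rfl, det4]
  ring

set_option maxHeartbeats 1000000 in
private theorem cof12_eq (J : Fin 6 → ℝ) : cof J 1 2 =
    -1*(J 5)^4 + (J 4)^2*(J 5)^2 + (J 3)^2*(J 5)^2 + -1*(J 3)^2*(J 4)^2 + -2*(J 2)^2*(J 5)^2 + (J 1)^2*(J 5)^2 + (J 1)^2*(J 4)^2 + (J 0)^2*(J 5)^2 + (J 0)^2*(J 3)^2 + -1*(J 0)^2*(J 1)^2 := by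
  have hsub : ((cayley J).submatrix (Fin.succAbove 1) (Fin.succAbove 2)) =
      !![0, (J 3)^2, (J 5)^2, 1;
         (J 4)^2, (J 2)^2, (J 0)^2, 1;
         (J 5)^2, (J 1)^2, 0, 1;
         1, 1, 1, 0] := by
    ext i j
    fin_cases i <;> fin_cases j <;> rfl
  rw [cof, hsub, show ((1:Fin 5):ℕ) + ((2:Fin 5):ℕ) = 3 from rfl, det4]
  ring

set_option maxHeartbeats 1000000 in
private theorem cof13_eq (J : Fin 6 → ℝ) : cof J 1 3 =
    (J 4)^2*(J 5)^2 + -1*(J 4)^4 + -1*(J 3)^2*(J 5)^2 + (J 3)^2*(J 4)^2 + (J 2)^2*(J 5)^2 + (J 2)^2*(J 4)^2 + -2*(J 1)^2*(J 4)^2 + (J 0)^2*(J 4)^2 + (J 0)^2*(J 3)^2 + -1*(J 0)^2*(J 2)^2 := by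
  have hsub : ((cayley J).submatrix (Fin.succAbove 1) (Fin.succAbove 3)) =
      !![0, (J 3)^2, (J 4)^2, 1;
         (J 4)^2, (J 2)^2, 0, 1;
         (J 5)^2, (J 1)^2, (J 0)^2, 1;
         1, 1, 1, 0] := by
    ext i j
    fin_cases i <;> fin_cases j <;> rfl
  rw [cof, hsub, show ((1:Fin 5):ℕ) + ((3:Fin 5):ℕ) = 4 from rfl, det4]
  ring

set_option maxHeartbeats 1000000 in
private theorem cof23_eq (J : Fin 6 → ℝ) : cof J 2 3 =
    -1*(J 4)^2*(J 5)^2 + (J 3)^2*(J 5)^2 + (J 3)^2*(J 4)^2 + -1*(J 3)^4 + (J 2)^2*(J 5)^2 + (J 2)^2*(J 3)^2 + (J 1)^2*(J 4)^2 + (J 1)^2*(J 3)^2 + -1*(J 1)^2*(J 2)^2 + -2*(J 0)^2*(J 3)^2 := by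
  have hsub : ((cayley J).submatrix (Fin.succAbove 2) (Fin.succAbove 3)) =
      !![0, (J 3)^2, (J 4)^2, 1;
         (J 3)^2, 0, (J 2)^2, 1;
         (J 5)^2, (J 1)^2, (J 0)^2, 1;
         1, 1, 1, 0] := by
    ext i j
    fin_cases i <;> fin_cases j <;> rfl
  rw [cof, hsub, show ((2:Fin 5):ℕ) + ((3:Fin 5):ℕ) = 5 from rfl, det4]
  ring

private theorem arccos_sum_gt {a b c : ℝ} (ha1 : -1 < a) (ha2 : a < 1) (hb1 : -1 < b) (hb2 : b < 1)
    (hc1 : -1 < c) (hc2 : c < 1) (h : a^2 + b^2 + c^2 + 2*(a*b*c) < 1) :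
    π < arccos a + arccos b + arccos c := by
  have hcpos : 0 < arccos c := arccos_pos.2 hc2
  rcases le_or_gt π (arccos a + arccos b) with h1 | h1
  · linarith
  · have hsa : (0:ℝ) < 1 - a^2 := by nlinarith
    have hsb : (0:ℝ) < 1 - b^2 := by nlinarith
    have key : a*b + c < Real.sqrt ((1-a^2)*(1-b^2)) := by
      rcases le_or_gt 0 (a*b+c) with h2 | h2
      · have hsq : (a*b+c)^2 < (1-a^2)*(1-b^2) := by nlinarith
        exact (Real.lt_sqrt h2).2 hsq
      · exact lt_of_lt_of_le h2 (Real.sqrt_nonneg _)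
    have hcos : Real.cos (arccos a + arccos b) < -c := by
      rw [Real.cos_add, Real.cos_arccos ha1.le ha2.le, Real.cos_arccos hb1.le hb2.le,
        Real.sin_arccos, Real.sin_arccos, ← Real.sqrt_mul hsa.le]
      linarith
    have h3 : π - arccos c < arccos a + arccos b := by
      by_contra hcon
      push_neg at hcon
      have hmono : Real.cos (π - arccos c) ≤ Real.cos (arccos a + arccos b) :=
        Real.cos_le_cos_of_nonneg_of_le_pi
          (add_nonneg (Real.arccos_nonneg a) (Real.arccos_nonneg b))
          (by linarith [Real.arccos_nonneg c]) hcon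
      rw [Real.cos_pi_sub, Real.cos_arccos hc1.le hc2.le] at hmono
      linarith
    linarith

set_option maxHeartbeats 1000000 in
private theorem vertex_aux {r1 r2 r3 C12 C13 C23 : ℝ}
    (h1 : 0 < r1) (h2 : 0 < r2) (h3 : 0 < r3)
    (h12 : C12^2 < (16*r1^2)*(16*r2^2)) (h13 : C13^2 < (16*r1^2)*(16*r3^2))
    (h23 : C23^2 < (16*r2^2)*(16*r3^2))
    (ht : 0 < (16*r1^2)*(16*r2^2)*(16*r3^2) - C12^2*(16*r3^2) - C13^2*(16*r2^2)
          - C23^2*(16*r1^2) - 2*(C12*C13*C23)) :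
    π < arccos (C12 / (16*r1*r2)) + arccos (C13 / (16*r1*r3)) + arccos (C23 / (16*r2*r3)) := by
  set a := C12 / (16*r1*r2) with hadef
  set b := C13 / (16*r1*r3) with hbdef
  set c := C23 / (16*r2*r3) with hcdef
  have d12 : (0:ℝ) < 16*r1*r2 := by positivity
  have d13 : (0:ℝ) < 16*r1*r3 := by positivity
  have d23 : (0:ℝ) < 16*r2*r3 := by positivity
  have ha : a^2 < 1 := by
    rw [hadef, div_pow, div_lt_one (by positivity)]
    calc C12^2 < (16*r1^2)*(16*r2^2) := h12
    _ = (16*r1*r2)^2 := by ring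
  have hb : b^2 < 1 := by
    rw [hbdef, div_pow, div_lt_one (by positivity)]
    calc C13^2 < (16*r1^2)*(16*r3^2) := h13
    _ = (16*r1*r3)^2 := by ring
  have hc : c^2 < 1 := by
    rw [hcdef, div_pow, div_lt_one (by positivity)]
    calc C23^2 < (16*r2^2)*(16*r3^2) := h23
    _ = (16*r2*r3)^2 := by ring
  have hmain : a^2 + b^2 + c^2 + 2*(a*b*c) < 1 := by
    have heq : a^2 + b^2 + c^2 + 2*(a*b*c)
        = 1 - ((16*r1^2)*(16*r2^2)*(16*r3^2) - C12^2*(16*r3^2) - C13^2*(16*r2^2)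
          - C23^2*(16*r1^2) - 2*(C12*C13*C23)) / ((16*r1^2)*(16*r2^2)*(16*r3^2)) := by
      rw [hadef, hbdef, hcdef]
      field_simp
      ring
    rw [heq]
    have : 0 < ((16*r1^2)*(16*r2^2)*(16*r3^2) - C12^2*(16*r3^2) - C13^2*(16*r2^2)
          - C23^2*(16*r1^2) - 2*(C12*C13*C23)) / ((16*r1^2)*(16*r2^2)*(16*r3^2)) :=
      div_pos ht (by positivity)
    linarith
  exact arccos_sum_gt (by nlinarith [sq_nonneg (a+1)]) (by nlinarith [sq_nonneg (a-1)])
    (by nlinarith [sq_nonneg (b+1)]) (by nlinarith [sq_nonneg (b-1)])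
    (by nlinarith [sq_nonneg (c+1)]) (by nlinarith [sq_nonneg (c-1)]) hmain

set_option maxHeartbeats 4000000

/-- For a nondegenerate Euclidean tetrahedron (positive edge lengths, strict
triangle inequalities on every face, `V² > 0`), the sum of the three interior
dihedral angles at each vertex exceeds `π`. -/
theorem vertex_angle_sum_gt_pi (J : Fin 6 → ℝ)
    (hpos : ∀ i, 0 < J i)
    (ht1 : StrictTri (J 0) (J 1) (J 2)) (ht2 : StrictTri (J 0) (J 4) (J 5))
    (ht3 : StrictTri (J 1) (J 3) (J 5)) (ht4 : StrictTri (J 2) (J 3) (J 4))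
    (hV : 0 < (1/288) * (cayley J).det) :
    thetaEint J 1 2 + thetaEint J 1 3 + thetaEint J 2 3 > π ∧
    thetaEint J 0 2 + thetaEint J 0 3 + thetaEint J 2 3 > π ∧
    thetaEint J 0 1 + thetaEint J 0 3 + thetaEint J 1 3 > π ∧
    thetaEint J 0 1 + thetaEint J 0 2 + thetaEint J 1 2 > π := by
  have hD : 0 < (cayley J).det := by linarith
  have hA0 : 0 < Asq J 0 := by simpa [Asq] using heron_pos' (hpos 0) ht1
  have hA1 : 0 < Asq J 1 := by simpa [Asq] using heron_pos' (hpos 0) ht2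
  have hA2 : 0 < Asq J 2 := by simpa [Asq] using heron_pos' (hpos 1) ht3
  have hA3 : 0 < Asq J 3 := by simpa [Asq] using heron_pos' (hpos 2) ht4
  have hp01 : (cof J 0 1)^2 < (16*Asq J 0)*(16*Asq J 1) := by
    have hid : (16*Asq J 0)*(16*Asq J 1) - (cof J 0 1)^2 = 2*(J 0)^2*(cayley J).det := by
      rw [cof01_eq, cayley_det_eq]
      simp [Asq, heron]
      ring
    have hpp : (0:ℝ) < 2*(J 0)^2*(cayley J).det :=
      mul_pos (mul_pos two_pos (pow_pos (hpos 0) 2)) hD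
    linarith
  have hp02 : (cof J 0 2)^2 < (16*Asq J 0)*(16*Asq J 2) := by
    have hid : (16*Asq J 0)*(16*Asq J 2) - (cof J 0 2)^2 = 2*(J 1)^2*(cayley J).det := by
      rw [cof02_eq, cayley_det_eq]
      simp [Asq, heron]
      ring
    have hpp : (0:ℝ) < 2*(J 1)^2*(cayley J).det :=
      mul_pos (mul_pos two_pos (pow_pos (hpos 1) 2)) hD
    linarith
  have hp03 : (cof J 0 3)^2 < (16*Asq J 0)*(16*Asq J 3) := by
    have hid : (16*Asq J 0)*(16*Asq J 3) - (cof J 0 3)^2 = 2*(J 2)^2*(cayley J).det := by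
      rw [cof03_eq, cayley_det_eq]
      simp [Asq, heron]
      ring
    have hpp : (0:ℝ) < 2*(J 2)^2*(cayley J).det :=
      mul_pos (mul_pos two_pos (pow_pos (hpos 2) 2)) hD
    linarith
  have hp12 : (cof J 1 2)^2 < (16*Asq J 1)*(16*Asq J 2) := by
    have hid : (16*Asq J 1)*(16*Asq J 2) - (cof J 1 2)^2 = 2*(J 5)^2*(cayley J).det := by
      rw [cof12_eq, cayley_det_eq]
      simp [Asq, heron]
      ring
    have hpp : (0:ℝ) < 2*(J 5)^2*(cayley J).det :=
      mul_pos (mul_pos two_pos (pow_pos (hpos 5) 2)) hD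
    linarith
  have hp13 : (cof J 1 3)^2 < (16*Asq J 1)*(16*Asq J 3) := by
    have hid : (16*Asq J 1)*(16*Asq J 3) - (cof J 1 3)^2 = 2*(J 4)^2*(cayley J).det := by
      rw [cof13_eq, cayley_det_eq]
      simp [Asq, heron]
      ring
    have hpp : (0:ℝ) < 2*(J 4)^2*(cayley J).det :=
      mul_pos (mul_pos two_pos (pow_pos (hpos 4) 2)) hD
    linarith
  have hp23 : (cof J 2 3)^2 < (16*Asq J 2)*(16*Asq J 3) := by
    have hid : (16*Asq J 2)*(16*Asq J 3) - (cof J 2 3)^2 = 2*(J 3)^2*(cayley J).det := by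
      rw [cof23_eq, cayley_det_eq]
      simp [Asq, heron]
      ring
    have hpp : (0:ℝ) < 2*(J 3)^2*(cayley J).det :=
      mul_pos (mul_pos two_pos (pow_pos (hpos 3) 2)) hD
    linarith
  have htr0 : 0 < (16*Asq J 1)*(16*Asq J 2)*(16*Asq J 3) - (cof J 1 2)^2*(16*Asq J 3)
      - (cof J 1 3)^2*(16*Asq J 2) - (cof J 2 3)^2*(16*Asq J 1)
      - 2*((cof J 1 2)*(cof J 1 3)*(cof J 2 3)) := by
    have hid : (16*Asq J 1)*(16*Asq J 2)*(16*Asq J 3) - (cof J 1 2)^2*(16*Asq J 3)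
        - (cof J 1 3)^2*(16*Asq J 2) - (cof J 2 3)^2*(16*Asq J 1)
        - 2*((cof J 1 2)*(cof J 1 3)*(cof J 2 3)) = ((cayley J).det)^2 := by
      rw [cof12_eq, cof13_eq, cof23_eq, cayley_det_eq]
      simp [Asq, heron]
      ring
    rw [hid]
    exact pow_pos hD 2
  have htr1 : 0 < (16*Asq J 0)*(16*Asq J 2)*(16*Asq J 3) - (cof J 0 2)^2*(16*Asq J 3)
      - (cof J 0 3)^2*(16*Asq J 2) - (cof J 2 3)^2*(16*Asq J 0)
      - 2*((cof J 0 2)*(cof J 0 3)*(cof J 2 3)) := by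
    have hid : (16*Asq J 0)*(16*Asq J 2)*(16*Asq J 3) - (cof J 0 2)^2*(16*Asq J 3)
        - (cof J 0 3)^2*(16*Asq J 2) - (cof J 2 3)^2*(16*Asq J 0)
        - 2*((cof J 0 2)*(cof J 0 3)*(cof J 2 3)) = ((cayley J).det)^2 := by
      rw [cof02_eq, cof03_eq, cof23_eq, cayley_det_eq]
      simp [Asq, heron]
      ring
    rw [hid]
    exact pow_pos hD 2
  have htr2 : 0 < (16*Asq J 0)*(16*Asq J 1)*(16*Asq J 3) - (cof J 0 1)^2*(16*Asq J 3)
      - (cof J 0 3)^2*(16*Asq J 1) - (cof J 1 3)^2*(16*Asq J 0)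
      - 2*((cof J 0 1)*(cof J 0 3)*(cof J 1 3)) := by
    have hid : (16*Asq J 0)*(16*Asq J 1)*(16*Asq J 3) - (cof J 0 1)^2*(16*Asq J 3)
        - (cof J 0 3)^2*(16*Asq J 1) - (cof J 1 3)^2*(16*Asq J 0)
        - 2*((cof J 0 1)*(cof J 0 3)*(cof J 1 3)) = ((cayley J).det)^2 := by
      rw [cof01_eq, cof03_eq, cof13_eq, cayley_det_eq]
      simp [Asq, heron]
      ring
    rw [hid]
    exact pow_pos hD 2
  have htr3 : 0 < (16*Asq J 0)*(16*Asq J 1)*(16*Asq J 2) - (cof J 0 1)^2*(16*Asq J 2)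
      - (cof J 0 2)^2*(16*Asq J 1) - (cof J 1 2)^2*(16*Asq J 0)
      - 2*((cof J 0 1)*(cof J 0 2)*(cof J 1 2)) := by
    have hid : (16*Asq J 0)*(16*Asq J 1)*(16*Asq J 2) - (cof J 0 1)^2*(16*Asq J 2)
        - (cof J 0 2)^2*(16*Asq J 1) - (cof J 1 2)^2*(16*Asq J 0)
        - 2*((cof J 0 1)*(cof J 0 2)*(cof J 1 2)) = ((cayley J).det)^2 := by
      rw [cof01_eq, cof02_eq, cof12_eq, cayley_det_eq]
      simp [Asq, heron]
      ring
    rw [hid]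
    exact pow_pos hD 2
  refine ⟨?_, ?_, ?_, ?_⟩
  · have h12' : (cof J 1 2)^2 < (16*(Real.sqrt (Asq J 1))^2)*(16*(Real.sqrt (Asq J 2))^2) := by
      rw [Real.sq_sqrt hA1.le, Real.sq_sqrt hA2.le]; exact hp12
    have h13' : (cof J 1 3)^2 < (16*(Real.sqrt (Asq J 1))^2)*(16*(Real.sqrt (Asq J 3))^2) := by
      rw [Real.sq_sqrt hA1.le, Real.sq_sqrt hA3.le]; exact hp13
    have h23' : (cof J 2 3)^2 < (16*(Real.sqrt (Asq J 2))^2)*(16*(Real.sqrt (Asq J 3))^2) := by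
      rw [Real.sq_sqrt hA2.le, Real.sq_sqrt hA3.le]; exact hp23
    have ht' : 0 < (16*(Real.sqrt (Asq J 1))^2)*(16*(Real.sqrt (Asq J 2))^2)*(16*(Real.sqrt (Asq J 3))^2)
        - (cof J 1 2)^2*(16*(Real.sqrt (Asq J 3))^2) - (cof J 1 3)^2*(16*(Real.sqrt (Asq J 2))^2)
        - (cof J 2 3)^2*(16*(Real.sqrt (Asq J 1))^2)
        - 2*((cof J 1 2)*(cof J 1 3)*(cof J 2 3)) := by
      rw [Real.sq_sqrt hA1.le, Real.sq_sqrt hA2.le, Real.sq_sqrt hA3.le]; exact htr0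
    have := vertex_aux (Real.sqrt_pos.2 hA1) (Real.sqrt_pos.2 hA2) (Real.sqrt_pos.2 hA3)
      h12' h13' h23' ht'
    simpa [thetaEint, gt_iff_lt] using this
  · have h12' : (cof J 0 2)^2 < (16*(Real.sqrt (Asq J 0))^2)*(16*(Real.sqrt (Asq J 2))^2) := by
      rw [Real.sq_sqrt hA0.le, Real.sq_sqrt hA2.le]; exact hp02
    have h13' : (cof J 0 3)^2 < (16*(Real.sqrt (Asq J 0))^2)*(16*(Real.sqrt (Asq J 3))^2) := by
      rw [Real.sq_sqrt hA0.le, Real.sq_sqrt hA3.le]; exact hp03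
    have h23' : (cof J 2 3)^2 < (16*(Real.sqrt (Asq J 2))^2)*(16*(Real.sqrt (Asq J 3))^2) := by
      rw [Real.sq_sqrt hA2.le, Real.sq_sqrt hA3.le]; exact hp23
    have ht' : 0 < (16*(Real.sqrt (Asq J 0))^2)*(16*(Real.sqrt (Asq J 2))^2)*(16*(Real.sqrt (Asq J 3))^2)
        - (cof J 0 2)^2*(16*(Real.sqrt (Asq J 3))^2) - (cof J 0 3)^2*(16*(Real.sqrt (Asq J 2))^2)
        - (cof J 2 3)^2*(16*(Real.sqrt (Asq J 0))^2)
        - 2*((cof J 0 2)*(cof J 0 3)*(cof J 2 3)) := by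
      rw [Real.sq_sqrt hA0.le, Real.sq_sqrt hA2.le, Real.sq_sqrt hA3.le]; exact htr1
    have := vertex_aux (Real.sqrt_pos.2 hA0) (Real.sqrt_pos.2 hA2) (Real.sqrt_pos.2 hA3)
      h12' h13' h23' ht'
    simpa [thetaEint, gt_iff_lt] using this
  · have h12' : (cof J 0 1)^2 < (16*(Real.sqrt (Asq J 0))^2)*(16*(Real.sqrt (Asq J 1))^2) := by
      rw [Real.sq_sqrt hA0.le, Real.sq_sqrt hA1.le]; exact hp01
    have h13' : (cof J 0 3)^2 < (16*(Real.sqrt (Asq J 0))^2)*(16*(Real.sqrt (Asq J 3))^2) := by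
      rw [Real.sq_sqrt hA0.le, Real.sq_sqrt hA3.le]; exact hp03
    have h23' : (cof J 1 3)^2 < (16*(Real.sqrt (Asq J 1))^2)*(16*(Real.sqrt (Asq J 3))^2) := by
      rw [Real.sq_sqrt hA1.le, Real.sq_sqrt hA3.le]; exact hp13
    have ht' : 0 < (16*(Real.sqrt (Asq J 0))^2)*(16*(Real.sqrt (Asq J 1))^2)*(16*(Real.sqrt (Asq J 3))^2)
        - (cof J 0 1)^2*(16*(Real.sqrt (Asq J 3))^2) - (cof J 0 3)^2*(16*(Real.sqrt (Asq J 1))^2)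
        - (cof J 1 3)^2*(16*(Real.sqrt (Asq J 0))^2)
        - 2*((cof J 0 1)*(cof J 0 3)*(cof J 1 3)) := by
      rw [Real.sq_sqrt hA0.le, Real.sq_sqrt hA1.le, Real.sq_sqrt hA3.le]; exact htr2
    have := vertex_aux (Real.sqrt_pos.2 hA0) (Real.sqrt_pos.2 hA1) (Real.sqrt_pos.2 hA3)
      h12' h13' h23' ht'
    simpa [thetaEint, gt_iff_lt] using this
  · have h12' : (cof J 0 1)^2 < (16*(Real.sqrt (Asq J 0))^2)*(16*(Real.sqrt (Asq J 1))^2) := by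
      rw [Real.sq_sqrt hA0.le, Real.sq_sqrt hA1.le]; exact hp01
    have h13' : (cof J 0 2)^2 < (16*(Real.sqrt (Asq J 0))^2)*(16*(Real.sqrt (Asq J 2))^2) := by
      rw [Real.sq_sqrt hA0.le, Real.sq_sqrt hA2.le]; exact hp02
    have h23' : (cof J 1 2)^2 < (16*(Real.sqrt (Asq J 1))^2)*(16*(Real.sqrt (Asq J 2))^2) := by
      rw [Real.sq_sqrt hA1.le, Real.sq_sqrt hA2.le]; exact hp12
    have ht' : 0 < (16*(Real.sqrt (Asq J 0))^2)*(16*(Real.sqrt (Asq J 1))^2)*(16*(Real.sqrt (Asq J 2))^2)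
        - (cof J 0 1)^2*(16*(Real.sqrt (Asq J 2))^2) - (cof J 0 2)^2*(16*(Real.sqrt (Asq J 1))^2)
        - (cof J 1 2)^2*(16*(Real.sqrt (Asq J 0))^2)
        - 2*((cof J 0 1)*(cof J 0 2)*(cof J 1 2)) := by
      rw [Real.sq_sqrt hA0.le, Real.sq_sqrt hA1.le, Real.sq_sqrt hA2.le]; exact htr3
    have := vertex_aux (Real.sqrt_pos.2 hA0) (Real.sqrt_pos.2 hA1) (Real.sqrt_pos.2 hA2)
      h12' h13' h23' ht'
    simpa [thetaEint, gt_iff_lt] using this
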